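/- arXiv:2407.04759 — 5 statements merged into one kernel-verified Lean document; each statement's English description precedes it below -/
import Mathlib

section
/- Let $n \ge m+1 \ge 2$ be integers and define $\alpha_j = \binom{n}{j}$ for $0 \le j \le m$ and $\alpha_j = \binom{n}{j} - \binom{n-m}{j-m}$ for $m+1 \le j \le n$. Then for all $0 \le k \le q \le n$, $\sum_{j=0}^{k} (-1)^{k-j} \binom{q-j}{k-j} \alpha_j = \binom{n-q+k-1}{k} - \binom{n-q+k-1-m}{k-m} + (-1)^{k-m}\binom{q-m}{k-m}$. -/
open Finset

-- partial alternating sum of binomials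
lemma alt_partial (N k : ℕ) :
    ∑ j ∈ range (k+1), (-1:ℤ)^j * ((N+1).choose j : ℤ) = (-1)^k * (N.choose k : ℤ) := by
  induction k with
  | zero => simp
  | succ k ih =>
    rw [Finset.sum_range_succ, ih, Nat.choose_succ_succ N k]
    push_cast
    ring

lemma core (N : ℕ) : ∀ q k : ℕ, k ≤ q → q ≤ N →
    ∑ j ∈ range (k+1), (-1:ℤ)^(k-j) * ((q-j).choose (k-j) : ℤ) * (N.choose j : ℤ)
      = ((N - q + k - 1).choose k : ℤ) := by
  intro q
  induction q with
  | zero =>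
    intro k hk _
    interval_cases k
    simp
  | succ q ih =>
    intro k hk hq
    rcases Nat.lt_or_ge k (q+1) with hlt | hge
    · -- k ≤ q : recurrence
      have hkq : k ≤ q := Nat.lt_succ_iff.mp hlt
      rcases Nat.eq_zero_or_pos k with rfl | hk1
      · simp
      · obtain ⟨K, rfl⟩ : ∃ K, k = K + 1 := ⟨k - 1, by omega⟩
        have e1 := ih (K+1) (by omega) (by omega)
        have e2 := ih K (by omega) (by omega)
        -- split last term of LHS
        rw [Finset.sum_range_succ]
        have hsplit : ∀ j ∈ range (K+1),
            (-1:ℤ)^(K+1-j) * ((q+1-j).choose (K+1-j) : ℤ) * (N.choose j : ℤ)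
            = (-1:ℤ)^(K+1-j) * ((q-j).choose (K+1-j) : ℤ) * (N.choose j : ℤ)
              - (-1:ℤ)^(K-j) * ((q-j).choose (K-j) : ℤ) * (N.choose j : ℤ) := by
          intro j hj
          simp only [Finset.mem_range] at hj
          have h1 : q+1-j = (q-j)+1 := by omega
          have h2 : K+1-j = (K-j)+1 := by omega
          rw [h1, h2, Nat.choose_succ_succ]
          push_cast
          ring
        rw [Finset.sum_congr rfl hsplit, Finset.sum_sub_distrib]
        rw [Finset.sum_range_succ] at e1
        have hlast : (-1:ℤ)^(K+1-(K+1)) * ((q-(K+1)).choose (K+1-(K+1)) : ℤ) * (N.choose (K+1) : ℤ)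
            = (-1:ℤ)^(K+1-(K+1)) * ((q+1-(K+1)).choose (K+1-(K+1)) : ℤ) * (N.choose (K+1) : ℤ) := by
          simp
        rw [hlast] at e1
        have : (∑ j ∈ range (K+1), (-1:ℤ)^(K+1-j) * ((q-j).choose (K+1-j) : ℤ) * (N.choose j : ℤ))
            + (-1:ℤ)^(K+1-(K+1)) * ((q+1-(K+1)).choose (K+1-(K+1)) : ℤ) * (N.choose (K+1) : ℤ)
            = ((N - q + (K+1) - 1).choose (K+1) : ℤ) := e1
        have goal1 : ((N - q + (K+1) - 1).choose (K+1) : ℤ) - ((N - q + K - 1).choose K : ℤ)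
            = ((N - (q+1) + (K+1) - 1).choose (K+1) : ℤ) := by
          have hP : N - q + (K+1) - 1 = (N - q + K - 1) + 1 := by omega
          have hP2 : N - (q+1) + (K+1) - 1 = N - q + K - 1 := by omega
          rw [hP, hP2, Nat.choose_succ_succ']
          push_cast
          ring
        linarith [e2, this]
    · -- k = q+1 : base
      have hkeq : k = q + 1 := le_antisymm hk hge
      subst hkeq
      obtain ⟨N', rfl⟩ : ∃ N', N = N' + 1 := ⟨N - 1, by omega⟩
      have hs : ∀ j ∈ range (q+1+1),
          (-1:ℤ)^(q+1-j) * ((q+1-j).choose (q+1-j) : ℤ) * ((N'+1).choose j : ℤ)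
          = (-1:ℤ)^(q+1) * ((-1:ℤ)^j * ((N'+1).choose j : ℤ)) := by
        intro j hj
        simp only [Finset.mem_range] at hj
        rw [Nat.choose_self]
        have : (-1:ℤ)^(q+1-j) = (-1:ℤ)^(q+1) * (-1:ℤ)^j := by
          rw [← pow_add, show q+1+j = (q+1-j) + 2*j by omega, pow_add, pow_mul]
          simp
        rw [this]
        push_cast
        ring
      rw [Finset.sum_congr rfl hs, ← Finset.mul_sum, alt_partial N' (q+1)]
      have : N' + 1 - (q+1) + (q+1) - 1 = N' := by omega
      rw [this, ← mul_assoc, ← pow_add, show q+1+(q+1) = 2*(q+1) by ring, pow_mul]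
      simp

theorem stmt1 (n m : ℕ) (hm : 1 ≤ m) (hn : m + 1 ≤ n)
    (α : ℕ → ℤ)
    (hα : ∀ j, α j = if j ≤ m then (n.choose j : ℤ)
      else (n.choose j : ℤ) - ((n - m).choose (j - m) : ℤ))
    (q k : ℕ) (hkq : k ≤ q) (hqn : q ≤ n) :
    ∑ j ∈ Finset.range (k + 1),
      (-1 : ℤ) ^ (k - j) * ((q - j).choose (k - j) : ℤ) * α j
      = ((n - q + k - 1).choose k : ℤ) - ((n - q + k - 1 - m).choose (k - m) : ℤ)
        + (-1 : ℤ) ^ (k - m) * ((q - m).choose (k - m) : ℤ) := by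
  set γ : ℕ → ℤ := fun j => if j ≤ m then 0 else ((n - m).choose (j - m) : ℤ) with hγ
  have hαγ : ∀ j, α j = (n.choose j : ℤ) - γ j := by
    intro j
    rw [hα j, hγ]
    by_cases h : j ≤ m <;> simp [h]
  have hsum : ∑ j ∈ Finset.range (k + 1),
      (-1 : ℤ) ^ (k - j) * ((q - j).choose (k - j) : ℤ) * α j
      = (∑ j ∈ Finset.range (k + 1),
          (-1 : ℤ) ^ (k - j) * ((q - j).choose (k - j) : ℤ) * (n.choose j : ℤ))
        - ∑ j ∈ Finset.range (k + 1),
          (-1 : ℤ) ^ (k - j) * ((q - j).choose (k - j) : ℤ) * γ j := by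
    rw [← Finset.sum_sub_distrib]
    exact Finset.sum_congr rfl fun j _ => by rw [hαγ j]; ring
  rw [hsum, core n q k hkq hqn]
  rcases le_or_gt k m with hkm | hkm
  · -- k ≤ m : correction sum is 0 and RHS extra terms cancel
    have hz : ∑ j ∈ Finset.range (k + 1),
        (-1 : ℤ) ^ (k - j) * ((q - j).choose (k - j) : ℤ) * γ j = 0 := by
      apply Finset.sum_eq_zero
      intro j hj
      simp only [Finset.mem_range] at hj
      have : j ≤ m := by omega
      simp [hγ, this]
    rw [hz]
    have h1 : k - m = 0 := by omega
    rw [h1]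
    simp
  · -- m < k
    have hK : k - m ≥ 1 := by omega
    set K := k - m with hKdef
    set Q := q - m with hQdef
    have hcore := core (n - m) Q K (by omega) (by omega)
    -- T = correction sum
    have hT : ∑ j ∈ Finset.range (k + 1),
        (-1 : ℤ) ^ (k - j) * ((q - j).choose (k - j) : ℤ) * γ j
        = ((n - m - Q + K - 1).choose K : ℤ) - (-1:ℤ)^K * ((Q).choose K : ℤ) := by
      have hsplit2 : Finset.range (k+1) = Finset.Ico 0 (m+1) ∪ Finset.Ico (m+1) (k+1) := by
        rw [Finset.range_eq_Ico, ← Finset.Ico_union_Ico_eq_Ico (by omega : 0 ≤ m+1) (by omega : m+1 ≤ k+1)]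
      rw [hsplit2, Finset.sum_union (by
        apply Finset.Ico_disjoint_Ico_consecutive)]
      have hz1 : ∑ j ∈ Finset.Ico 0 (m+1),
          (-1 : ℤ) ^ (k - j) * ((q - j).choose (k - j) : ℤ) * γ j = 0 := by
        apply Finset.sum_eq_zero
        intro j hj
        simp only [Finset.mem_Ico] at hj
        have : j ≤ m := by omega
        simp [hγ, this]
      rw [hz1, zero_add]
      rw [Finset.sum_Ico_eq_sum_range]
      rw [Finset.sum_range_succ'] at hcore
      have hmatch : ∀ i ∈ Finset.range (k+1-(m+1)),
          (-1 : ℤ) ^ (k - (m+1+i)) * ((q - (m+1+i)).choose (k - (m+1+i)) : ℤ) * γ (m+1+i)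
          = (-1 : ℤ) ^ (K - (i+1)) * ((Q - (i+1)).choose (K - (i+1)) : ℤ) * ((n-m).choose (i+1) : ℤ) := by
        intro i hi
        simp only [Finset.mem_range] at hi
        have hg : γ (m+1+i) = ((n - m).choose (m+1+i - m) : ℤ) := by
          simp [hγ, show ¬ (m+1+i ≤ m) by omega]
        rw [hg]
        have e1 : k - (m+1+i) = K - (i+1) := by omega
        have e2 : q - (m+1+i) = Q - (i+1) := by omega
        have e3 : m+1+i - m = i+1 := by omega
        rw [e1, e2, e3]
      rw [Finset.sum_congr rfl hmatch]
      have hrange : k + 1 - (m+1) = K := by omega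
      rw [hrange]
      have h0 : (-1:ℤ)^(K-0) * ((Q-0).choose (K-0) : ℤ) * ((n-m).choose 0 : ℤ)
          = (-1:ℤ)^K * ((Q).choose K : ℤ) := by simp
      rw [h0] at hcore
      linarith [hcore]
    rw [hT]
    have e4 : n - m - Q + K - 1 = n - q + k - 1 - m := by omega
    have e5 : (Q : ℕ) = q - m := rfl
    rw [e4]
    ring
end

section
/- Define $f_k(x) = \binom{x}{k} - 2\binom{x}{k-1}$ for $2 \le k \le 6$. For all integers $n \ge 16$, $f_6(n) - (f_6(n-1) + f_5(n-2) + f_4(n-3) + f_3(n-4) + f_2(n-5)) = n - 7 \ge 0$. -/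
lemma pascalZ (a k : ℕ) :
    (((a + 1).choose (k + 1) : ℤ)) = (a.choose k : ℤ) + (a.choose (k + 1) : ℤ) := by
  exact_mod_cast Nat.choose_succ_succ a k

set_option maxHeartbeats 1000000 in
theorem stmt8 (f : ℕ → ℕ → ℤ)
    (hf : ∀ k, 2 ≤ k → k ≤ 6 → ∀ x, f k x = (x.choose k : ℤ) - 2 * (x.choose (k - 1) : ℤ)) :
    ∀ n : ℕ, 16 ≤ n →
      f 6 n - (f 6 (n - 1) + f 5 (n - 2) + f 4 (n - 3) + f 3 (n - 4) + f 2 (n - 5))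
        = (n : ℤ) - 7 ∧ (0 : ℤ) ≤ (n : ℤ) - 7 := by
  intro n hn
  obtain ⟨m, rfl⟩ : ∃ m, n = m + 16 := ⟨n - 16, by omega⟩
  have h1 : m + 16 - 1 = m + 15 := by omega
  have h2 : m + 16 - 2 = m + 14 := by omega
  have h3 : m + 16 - 3 = m + 13 := by omega
  have h4 : m + 16 - 4 = m + 12 := by omega
  have h5 : m + 16 - 5 = m + 11 := by omega
  rw [hf 6 (by norm_num) (by norm_num), hf 6 (by norm_num) (by norm_num),
    hf 5 (by norm_num) (by norm_num), hf 4 (by norm_num) (by norm_num),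
    hf 3 (by norm_num) (by norm_num), hf 2 (by norm_num) (by norm_num),
    h1, h2, h3, h4, h5]
  refine ⟨?_, by push_cast; omega⟩
  norm_num
  have e1 := pascalZ (m + 15) 5
  have e2 := pascalZ (m + 15) 4
  have e3 := pascalZ (m + 14) 4
  have e4 := pascalZ (m + 14) 3
  have e5 := pascalZ (m + 13) 3
  have e6 := pascalZ (m + 13) 2
  have e7 := pascalZ (m + 12) 2
  have e8 := pascalZ (m + 12) 1
  have e9 := pascalZ (m + 11) 1
  have e10 := pascalZ (m + 11) 0
  have c1 : ((m + 11).choose 1 : ℤ) = (m : ℤ) + 11 := by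
    rw [Nat.choose_one_right]; push_cast; ring
  have c2 : ((m + 11).choose 0 : ℤ) = 1 := by simp
  have c3 : (m.choose 0 : ℤ) = 1 := by simp
  push_cast at e1 e2 e3 e4 e5 e6 e7 e8 e9 e10 ⊢
  linarith
end

section
/- Define $f_k(x) = \binom{x}{k} - \binom{x}{k-1}$ for $2 \le k \le 7$. For all integers $n \ge 13$, $f_7(n) - (f_7(n-1) + f_6(n-2) + f_5(n-3) + f_4(n-4) + f_3(n-5) + f_2(n-6)) = n - 7 \ge 0$. -/
set_option maxHeartbeats 1000000

lemma aux9 : ∀ m : ℕ,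
    (m+13).choose 7 + (m+12).choose 6 + (m+11).choose 5 + (m+10).choose 4 +
      (m+9).choose 3 + (m+8).choose 2 + (m+7).choose 1
    = (m+13).choose 6 + (m+12).choose 7 + (m+11).choose 6 + (m+10).choose 5 +
      (m+9).choose 4 + (m+8).choose 3 + (m+7).choose 2 + (m+6) := by
  intro m
  induction m with
  | zero => decide
  | succ k ih =>
    have p7 : ∀ a:ℕ, (a+1).choose 7 = a.choose 6 + a.choose 7 := fun a => Nat.choose_succ_succ a 6
    have p6 : ∀ a:ℕ, (a+1).choose 6 = a.choose 5 + a.choose 6 := fun a => Nat.choose_succ_succ a 5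
    have p5 : ∀ a:ℕ, (a+1).choose 5 = a.choose 4 + a.choose 5 := fun a => Nat.choose_succ_succ a 4
    have p4 : ∀ a:ℕ, (a+1).choose 4 = a.choose 3 + a.choose 4 := fun a => Nat.choose_succ_succ a 3
    have p3 : ∀ a:ℕ, (a+1).choose 3 = a.choose 2 + a.choose 3 := fun a => Nat.choose_succ_succ a 2
    have p2 : ∀ a:ℕ, (a+1).choose 2 = a.choose 1 + a.choose 2 := fun a => Nat.choose_succ_succ a 1
    have q0 : (k + 1 + 13).choose 7 = (k + 13).choose 6 + (k + 13).choose 7 := by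
      rw [show k + 1 + 13 = (k + 13) + 1 by omega]; exact Nat.choose_succ_succ _ _
    have q1 : (k + 1 + 12).choose 6 = (k + 12).choose 5 + (k + 12).choose 6 := by
      rw [show k + 1 + 12 = (k + 12) + 1 by omega]; exact Nat.choose_succ_succ _ _
    have q2 : (k + 1 + 11).choose 5 = (k + 11).choose 4 + (k + 11).choose 5 := by
      rw [show k + 1 + 11 = (k + 11) + 1 by omega]; exact Nat.choose_succ_succ _ _
    have q3 : (k + 1 + 10).choose 4 = (k + 10).choose 3 + (k + 10).choose 4 := by
      rw [show k + 1 + 10 = (k + 10) + 1 by omega]; exact Nat.choose_succ_succ _ _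
    have q4 : (k + 1 + 9).choose 3 = (k + 9).choose 2 + (k + 9).choose 3 := by
      rw [show k + 1 + 9 = (k + 9) + 1 by omega]; exact Nat.choose_succ_succ _ _
    have q5 : (k + 1 + 8).choose 2 = (k + 8).choose 1 + (k + 8).choose 2 := by
      rw [show k + 1 + 8 = (k + 8) + 1 by omega]; exact Nat.choose_succ_succ _ _
    have q6 : (k + 1 + 13).choose 6 = (k + 13).choose 5 + (k + 13).choose 6 := by
      rw [show k + 1 + 13 = (k + 13) + 1 by omega]; exact Nat.choose_succ_succ _ _
    have q7 : (k + 1 + 12).choose 7 = (k + 12).choose 6 + (k + 12).choose 7 := by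
      rw [show k + 1 + 12 = (k + 12) + 1 by omega]; exact Nat.choose_succ_succ _ _
    have q8 : (k + 1 + 11).choose 6 = (k + 11).choose 5 + (k + 11).choose 6 := by
      rw [show k + 1 + 11 = (k + 11) + 1 by omega]; exact Nat.choose_succ_succ _ _
    have q9 : (k + 1 + 10).choose 5 = (k + 10).choose 4 + (k + 10).choose 5 := by
      rw [show k + 1 + 10 = (k + 10) + 1 by omega]; exact Nat.choose_succ_succ _ _
    have q10 : (k + 1 + 9).choose 4 = (k + 9).choose 3 + (k + 9).choose 4 := by
      rw [show k + 1 + 9 = (k + 9) + 1 by omega]; exact Nat.choose_succ_succ _ _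
    have q11 : (k + 1 + 8).choose 3 = (k + 8).choose 2 + (k + 8).choose 3 := by
      rw [show k + 1 + 8 = (k + 8) + 1 by omega]; exact Nat.choose_succ_succ _ _
    have q12 : (k + 1 + 7).choose 2 = (k + 7).choose 1 + (k + 7).choose 2 := by
      rw [show k + 1 + 7 = (k + 7) + 1 by omega]; exact Nat.choose_succ_succ _ _
    have r1 : (k + 1 + 7).choose 1 = k + 1 + 7 := Nat.choose_one_right _
    have r2 : (k + 7).choose 1 = k + 7 := Nat.choose_one_right _
    have r3 : (k + 8).choose 1 = k + 8 := Nat.choose_one_right _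
    have s8_2 : (k + 8).choose 2 = (k + 7).choose 1 + (k + 7).choose 2 := by
      rw [show k + 8 = (k + 7) + 1 by omega]; exact Nat.choose_succ_succ _ _
    have s8_3 : (k + 8).choose 3 = (k + 7).choose 2 + (k + 7).choose 3 := by
      rw [show k + 8 = (k + 7) + 1 by omega]; exact Nat.choose_succ_succ _ _
    have s8_4 : (k + 8).choose 4 = (k + 7).choose 3 + (k + 7).choose 4 := by
      rw [show k + 8 = (k + 7) + 1 by omega]; exact Nat.choose_succ_succ _ _
    have s8_5 : (k + 8).choose 5 = (k + 7).choose 4 + (k + 7).choose 5 := by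
      rw [show k + 8 = (k + 7) + 1 by omega]; exact Nat.choose_succ_succ _ _
    have s8_6 : (k + 8).choose 6 = (k + 7).choose 5 + (k + 7).choose 6 := by
      rw [show k + 8 = (k + 7) + 1 by omega]; exact Nat.choose_succ_succ _ _
    have s8_7 : (k + 8).choose 7 = (k + 7).choose 6 + (k + 7).choose 7 := by
      rw [show k + 8 = (k + 7) + 1 by omega]; exact Nat.choose_succ_succ _ _
    have s9_2 : (k + 9).choose 2 = (k + 8).choose 1 + (k + 8).choose 2 := by
      rw [show k + 9 = (k + 8) + 1 by omega]; exact Nat.choose_succ_succ _ _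
    have s9_3 : (k + 9).choose 3 = (k + 8).choose 2 + (k + 8).choose 3 := by
      rw [show k + 9 = (k + 8) + 1 by omega]; exact Nat.choose_succ_succ _ _
    have s9_4 : (k + 9).choose 4 = (k + 8).choose 3 + (k + 8).choose 4 := by
      rw [show k + 9 = (k + 8) + 1 by omega]; exact Nat.choose_succ_succ _ _
    have s9_5 : (k + 9).choose 5 = (k + 8).choose 4 + (k + 8).choose 5 := by
      rw [show k + 9 = (k + 8) + 1 by omega]; exact Nat.choose_succ_succ _ _
    have s9_6 : (k + 9).choose 6 = (k + 8).choose 5 + (k + 8).choose 6 := by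
      rw [show k + 9 = (k + 8) + 1 by omega]; exact Nat.choose_succ_succ _ _
    have s9_7 : (k + 9).choose 7 = (k + 8).choose 6 + (k + 8).choose 7 := by
      rw [show k + 9 = (k + 8) + 1 by omega]; exact Nat.choose_succ_succ _ _
    have s10_2 : (k + 10).choose 2 = (k + 9).choose 1 + (k + 9).choose 2 := by
      rw [show k + 10 = (k + 9) + 1 by omega]; exact Nat.choose_succ_succ _ _
    have s10_3 : (k + 10).choose 3 = (k + 9).choose 2 + (k + 9).choose 3 := by
      rw [show k + 10 = (k + 9) + 1 by omega]; exact Nat.choose_succ_succ _ _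
    have s10_4 : (k + 10).choose 4 = (k + 9).choose 3 + (k + 9).choose 4 := by
      rw [show k + 10 = (k + 9) + 1 by omega]; exact Nat.choose_succ_succ _ _
    have s10_5 : (k + 10).choose 5 = (k + 9).choose 4 + (k + 9).choose 5 := by
      rw [show k + 10 = (k + 9) + 1 by omega]; exact Nat.choose_succ_succ _ _
    have s10_6 : (k + 10).choose 6 = (k + 9).choose 5 + (k + 9).choose 6 := by
      rw [show k + 10 = (k + 9) + 1 by omega]; exact Nat.choose_succ_succ _ _
    have s10_7 : (k + 10).choose 7 = (k + 9).choose 6 + (k + 9).choose 7 := by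
      rw [show k + 10 = (k + 9) + 1 by omega]; exact Nat.choose_succ_succ _ _
    have s11_2 : (k + 11).choose 2 = (k + 10).choose 1 + (k + 10).choose 2 := by
      rw [show k + 11 = (k + 10) + 1 by omega]; exact Nat.choose_succ_succ _ _
    have s11_3 : (k + 11).choose 3 = (k + 10).choose 2 + (k + 10).choose 3 := by
      rw [show k + 11 = (k + 10) + 1 by omega]; exact Nat.choose_succ_succ _ _
    have s11_4 : (k + 11).choose 4 = (k + 10).choose 3 + (k + 10).choose 4 := by
      rw [show k + 11 = (k + 10) + 1 by omega]; exact Nat.choose_succ_succ _ _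
    have s11_5 : (k + 11).choose 5 = (k + 10).choose 4 + (k + 10).choose 5 := by
      rw [show k + 11 = (k + 10) + 1 by omega]; exact Nat.choose_succ_succ _ _
    have s11_6 : (k + 11).choose 6 = (k + 10).choose 5 + (k + 10).choose 6 := by
      rw [show k + 11 = (k + 10) + 1 by omega]; exact Nat.choose_succ_succ _ _
    have s11_7 : (k + 11).choose 7 = (k + 10).choose 6 + (k + 10).choose 7 := by
      rw [show k + 11 = (k + 10) + 1 by omega]; exact Nat.choose_succ_succ _ _
    have s12_2 : (k + 12).choose 2 = (k + 11).choose 1 + (k + 11).choose 2 := by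
      rw [show k + 12 = (k + 11) + 1 by omega]; exact Nat.choose_succ_succ _ _
    have s12_3 : (k + 12).choose 3 = (k + 11).choose 2 + (k + 11).choose 3 := by
      rw [show k + 12 = (k + 11) + 1 by omega]; exact Nat.choose_succ_succ _ _
    have s12_4 : (k + 12).choose 4 = (k + 11).choose 3 + (k + 11).choose 4 := by
      rw [show k + 12 = (k + 11) + 1 by omega]; exact Nat.choose_succ_succ _ _
    have s12_5 : (k + 12).choose 5 = (k + 11).choose 4 + (k + 11).choose 5 := by
      rw [show k + 12 = (k + 11) + 1 by omega]; exact Nat.choose_succ_succ _ _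
    have s12_6 : (k + 12).choose 6 = (k + 11).choose 5 + (k + 11).choose 6 := by
      rw [show k + 12 = (k + 11) + 1 by omega]; exact Nat.choose_succ_succ _ _
    have s12_7 : (k + 12).choose 7 = (k + 11).choose 6 + (k + 11).choose 7 := by
      rw [show k + 12 = (k + 11) + 1 by omega]; exact Nat.choose_succ_succ _ _
    have s13_2 : (k + 13).choose 2 = (k + 12).choose 1 + (k + 12).choose 2 := by
      rw [show k + 13 = (k + 12) + 1 by omega]; exact Nat.choose_succ_succ _ _
    have s13_3 : (k + 13).choose 3 = (k + 12).choose 2 + (k + 12).choose 3 := by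
      rw [show k + 13 = (k + 12) + 1 by omega]; exact Nat.choose_succ_succ _ _
    have s13_4 : (k + 13).choose 4 = (k + 12).choose 3 + (k + 12).choose 4 := by
      rw [show k + 13 = (k + 12) + 1 by omega]; exact Nat.choose_succ_succ _ _
    have s13_5 : (k + 13).choose 5 = (k + 12).choose 4 + (k + 12).choose 5 := by
      rw [show k + 13 = (k + 12) + 1 by omega]; exact Nat.choose_succ_succ _ _
    have s13_6 : (k + 13).choose 6 = (k + 12).choose 5 + (k + 12).choose 6 := by
      rw [show k + 13 = (k + 12) + 1 by omega]; exact Nat.choose_succ_succ _ _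
    have s13_7 : (k + 13).choose 7 = (k + 12).choose 6 + (k + 12).choose 7 := by
      rw [show k + 13 = (k + 12) + 1 by omega]; exact Nat.choose_succ_succ _ _
    have t7 : (k + 7).choose 1 = k + 7 := Nat.choose_one_right _
    have t8 : (k + 8).choose 1 = k + 8 := Nat.choose_one_right _
    have t9 : (k + 9).choose 1 = k + 9 := Nat.choose_one_right _
    have t10 : (k + 10).choose 1 = k + 10 := Nat.choose_one_right _
    have t11 : (k + 11).choose 1 = k + 11 := Nat.choose_one_right _
    have t12 : (k + 12).choose 1 = k + 12 := Nat.choose_one_right _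
    have t13 : (k + 13).choose 1 = k + 13 := Nat.choose_one_right _
    linarith

theorem stmt9 (f : ℕ → ℕ → ℤ)
    (hf : ∀ k, 2 ≤ k → k ≤ 7 → ∀ x, f k x = (x.choose k : ℤ) - (x.choose (k - 1) : ℤ)) :
    ∀ n : ℕ, 13 ≤ n →
      f 7 n - (f 7 (n - 1) + f 6 (n - 2) + f 5 (n - 3) + f 4 (n - 4) + f 3 (n - 5) + f 2 (n - 6))
        = (n : ℤ) - 7 ∧ (0 : ℤ) ≤ (n : ℤ) - 7 := by
  intro n hn
  obtain ⟨m, rfl⟩ : ∃ m, n = m + 13 := ⟨n - 13, by omega⟩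
  rw [hf 7 (by norm_num) (by norm_num), hf 7 (by norm_num) (by norm_num),
    hf 6 (by norm_num) (by norm_num), hf 5 (by norm_num) (by norm_num),
    hf 4 (by norm_num) (by norm_num), hf 3 (by norm_num) (by norm_num),
    hf 2 (by norm_num) (by norm_num)]
  have e1 : m + 13 - 1 = m + 12 := by omega
  have e2 : m + 13 - 2 = m + 11 := by omega
  have e3 : m + 13 - 3 = m + 10 := by omega
  have e4 : m + 13 - 4 = m + 9 := by omega
  have e5 : m + 13 - 5 = m + 8 := by omega
  have e6 : m + 13 - 6 = m + 7 := by omega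
  rw [e1, e2, e3, e4, e5, e6]
  have h := aux9 m
  constructor
  · push_cast at h ⊢
    linarith
  · push_cast; linarith
end

section
/- Let $n \ge 10$ and suppose $\alpha_3 = \binom{n_3}{3} + \binom{n_2}{2} + \binom{n_1}{1}$ with $n > n_3 > n_2 > n_1 \ge 0$ and $n_3 \ge n-2$, and $\alpha_4 \le \binom{n_3}{4} + \binom{n_2}{3} + \binom{n_1}{2}$. Then $3\alpha_4 - 4\alpha_3 \le 3\binom{n}{4} - 4\binom{n}{3}$. -/
lemma ch1 (m : ℕ) : ((m.choose 1 : ℕ) : ℤ) = m := by simp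

lemma ch2 (m : ℕ) : ((m.choose 2 : ℕ) : ℤ) * 2 = m * (m - 1) := by
  induction m with
  | zero => simp
  | succ k ih =>
    rw [Nat.choose_succ_succ, Nat.choose_one_right]
    push_cast
    push_cast at ih
    nlinarith [ih]

lemma ch3 (m : ℕ) : ((m.choose 3 : ℕ) : ℤ) * 6 = m * (m - 1) * (m - 2) := by
  induction m with
  | zero => simp
  | succ k ih =>
    rw [Nat.choose_succ_succ]
    have := ch2 k
    push_cast
    push_cast at ih this
    nlinarith [ih, this]

lemma ch4 (m : ℕ) : ((m.choose 4 : ℕ) : ℤ) * 24 = m * (m - 1) * (m - 2) * (m - 3) := by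
  induction m with
  | zero => simp
  | succ k ih =>
    rw [Nat.choose_succ_succ]
    have := ch3 k
    push_cast
    push_cast at ih this
    nlinarith [ih, this]

lemma cube_mono (x M : ℤ) (h0 : 0 ≤ x) (h1 : x ≤ M) (h2 : 6 ≤ M) :
    x * (x - 1) * (x - 6) ≤ M * (M - 1) * (M - 6) := by
  rcases le_or_gt x 6 with h | h
  · have hL : x * (x - 1) * (x - 6) ≤ 0 := by
      rcases eq_or_lt_of_le h0 with h' | h'
      · simp [← h']
      · have : (0:ℤ) ≤ x * (x - 1) * (6 - x) :=
          mul_nonneg (mul_nonneg h0 (by omega)) (by omega)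
        nlinarith [this]
    have hR : 0 ≤ M * (M - 1) * (M - 6) :=
      mul_nonneg (mul_nonneg (by omega) (by omega)) (by omega)
    linarith
  · nlinarith [mul_nonneg (sub_nonneg.2 h1) (mul_nonneg (by omega : (0:ℤ) ≤ x - 1) (by omega : (0:ℤ) ≤ x - 6)),
      mul_nonneg (sub_nonneg.2 h1) (mul_nonneg (by omega : (0:ℤ) ≤ M - 1) (by omega : (0:ℤ) ≤ M - 6)),
      mul_nonneg (sub_nonneg.2 h1) (mul_nonneg (by omega : (0:ℤ) ≤ x) (by omega : (0:ℤ) ≤ M - 7))]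

lemma quad_mono (x M : ℤ) (h0 : 0 ≤ x) (h1 : x ≤ M) (h2 : 4 ≤ M) :
    x * (3 * x - 11) ≤ M * (3 * M - 11) := by
  rcases le_or_gt x 3 with h | h
  · nlinarith
  · nlinarith

lemma key1 (a c d : ℤ) (ha : 10 ≤ a) (hc : c ≤ a - 2) (hd : d + 1 ≤ c) (hd0 : 0 ≤ d) :
    3*(a-1)*(a-2)*(a-3)*(a-4) + 12*c*(c-1)*(c-2) + 36*d*(d-1)
      - 16*(a-1)*(a-2)*(a-3) - 48*c*(c-1) - 96*d
    ≤ 3*a*(a-1)*(a-2)*(a-3) - 16*a*(a-1)*(a-2) := by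
  have h1 := cube_mono c (a - 2) (by linarith) hc (by linarith)
  have h2 := quad_mono d (a - 3) hd0 (by linarith) (by linarith)
  have h10 : (0:ℤ) ≤ a - 10 := by linarith
  nlinarith [h1, h2, mul_nonneg (mul_nonneg h10 h10) h10, mul_nonneg h10 h10]

lemma key2 (a c d : ℤ) (ha : 10 ≤ a) (hc : c ≤ a - 3) (hd : d + 1 ≤ c) (hd0 : 0 ≤ d) :
    3*(a-2)*(a-3)*(a-4)*(a-5) + 12*c*(c-1)*(c-2) + 36*d*(d-1)
      - 16*(a-2)*(a-3)*(a-4) - 48*c*(c-1) - 96*d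
    ≤ 3*a*(a-1)*(a-2)*(a-3) - 16*a*(a-1)*(a-2) := by
  have h1 := cube_mono c (a - 3) (by linarith) hc (by linarith)
  have h2 := quad_mono d (a - 4) hd0 (by linarith) (by linarith)
  have h10 : (0:ℤ) ≤ a - 10 := by linarith
  nlinarith [h1, h2, mul_nonneg (mul_nonneg h10 h10) h10, mul_nonneg h10 h10]

theorem stmt10 (n n3 n2 n1 : ℕ) (hn : 10 ≤ n)
    (h1 : n3 < n) (h2 : n2 < n3) (h3 : n1 < n2) (h4 : n - 2 ≤ n3)
    (α3 α4 : ℤ)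
    (hα3 : α3 = (n3.choose 3 : ℤ) + (n2.choose 2 : ℤ) + (n1.choose 1 : ℤ))
    (hα4 : α4 ≤ (n3.choose 4 : ℤ) + (n2.choose 3 : ℤ) + (n1.choose 2 : ℤ)) :
    3 * α4 - 4 * α3 ≤ 3 * (n.choose 4 : ℤ) - 4 * (n.choose 3 : ℤ) := by
  have hb : n3 = n - 1 ∨ n3 = n - 2 := by omega
  have ha : (10 : ℤ) ≤ (n : ℤ) := by omega
  have hcd : (n1 : ℤ) + 1 ≤ (n2 : ℤ) := by omega
  have hd0 : (0 : ℤ) ≤ (n1 : ℤ) := by positivity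
  have e2c := ch2 n2
  have e3c := ch3 n2
  have e1d := ch1 n1
  have e2d := ch2 n1
  have e3b := ch3 n3
  have e4b := ch4 n3
  have e3a := ch3 n
  have e4a := ch4 n
  rcases hb with hb | hb
  · have hbv : (n3 : ℤ) = (n : ℤ) - 1 := by omega
    have hc : (n2 : ℤ) ≤ (n : ℤ) - 2 := by omega
    rw [hbv] at e3b e4b
    have := key1 (n : ℤ) (n2 : ℤ) (n1 : ℤ) ha hc hcd hd0
    linarith [this, e2c, e3c, e1d, e2d, e3b, e4b, e3a, e4a, hα3, hα4]
  · have hbv : (n3 : ℤ) = (n : ℤ) - 2 := by omega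
    have hc : (n2 : ℤ) ≤ (n : ℤ) - 3 := by omega
    rw [hbv] at e3b e4b
    have := key2 (n : ℤ) (n2 : ℤ) (n1 : ℤ) ha hc hcd hd0
    linarith [this, e2c, e3c, e1d, e2d, e3b, e4b, e3a, e4a, hα3, hα4]
end

section
/- Let $n \ge 10$ and suppose $\alpha_2 = \binom{n_2}{2} + \binom{n_1}{1}$ with $n > n_2 > n_1 \ge 0$ and $n_2 \ge n-2$, and $\alpha_3 \le \binom{n_2}{3} + \binom{n_1}{2}$. Then $6\alpha_3 - 10\alpha_2 \le 6\binom{n}{3} - 10\binom{n}{2}$. -/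
lemma c2aux (t : ℕ) : 2 * t.choose 2 + t = t ^ 2 := by
  induction t with
  | zero => rfl
  | succ k ih =>
    rw [Nat.choose_succ_succ]
    simp only [Nat.succ_eq_add_one, Nat.reduceAdd, Nat.choose_one_right] at *
    have : (k + 1) ^ 2 = k ^ 2 + 2 * k + 1 := by ring
    omega

lemma c3aux (t : ℕ) : 6 * t.choose 3 + 3 * t ^ 2 = t ^ 3 + 2 * t := by
  induction t with
  | zero => rfl
  | succ k ih =>
    rw [Nat.choose_succ_succ]
    simp only [Nat.succ_eq_add_one, Nat.reduceAdd] at *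
    have h2 := c2aux k
    have e1 : (k + 1) ^ 2 = k ^ 2 + 2 * k + 1 := by ring
    have e2 : (k + 1) ^ 3 = k ^ 3 + 3 * k ^ 2 + 3 * k + 1 := by ring
    omega

set_option maxHeartbeats 1000000 in
theorem stmt14 (n n2 n1 : ℕ) (hn : 10 ≤ n)
    (h1 : n2 < n) (h2 : n1 < n2) (h3 : n - 2 ≤ n2)
    (α2 α3 : ℤ)
    (hα2 : α2 = (n2.choose 2 : ℤ) + (n1.choose 1 : ℤ))
    (hα3 : α3 ≤ (n2.choose 3 : ℤ) + (n1.choose 2 : ℤ)) :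
    6 * α3 - 10 * α2 ≤ 6 * (n.choose 3 : ℤ) - 10 * (n.choose 2 : ℤ) := by
  have e2a : 2 * (n2.choose 2 : ℤ) + n2 = (n2 : ℤ) ^ 2 := by exact_mod_cast c2aux n2
  have e2b : 2 * (n1.choose 2 : ℤ) + n1 = (n1 : ℤ) ^ 2 := by exact_mod_cast c2aux n1
  have e2n : 2 * (n.choose 2 : ℤ) + n = (n : ℤ) ^ 2 := by exact_mod_cast c2aux n
  have e3a : 6 * (n2.choose 3 : ℤ) + 3 * (n2 : ℤ) ^ 2 = (n2 : ℤ) ^ 3 + 2 * n2 := by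
    exact_mod_cast c3aux n2
  have e3n : 6 * (n.choose 3 : ℤ) + 3 * (n : ℤ) ^ 2 = (n : ℤ) ^ 3 + 2 * n := by
    exact_mod_cast c3aux n
  have h1' : (n1.choose 1 : ℤ) = (n1 : ℤ) := by simp
  have hcase : (n2 : ℤ) = (n : ℤ) - 1 ∨ (n2 : ℤ) = (n : ℤ) - 2 := by omega
  have hB : (n1 : ℤ) ≤ (n2 : ℤ) - 1 := by omega
  have hB0 : (0 : ℤ) ≤ (n1 : ℤ) := by positivity
  have hN : (10 : ℤ) ≤ (n : ℤ) := by exact_mod_cast hn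
  have key : 6 * α3 - 10 * α2 ≤
      (n2:ℤ)^3 - 8*(n2:ℤ)^2 + 7*(n2:ℤ) + 3*(n1:ℤ)^2 - 13*(n1:ℤ) := by
    rw [hα2, h1']
    linarith [hα3, e2a, e2b, e3a]
  have rhs : 6 * (n.choose 3 : ℤ) - 10 * (n.choose 2 : ℤ)
      = (n:ℤ)^3 - 8*(n:ℤ)^2 + 7*(n:ℤ) := by linarith [e2n, e3n]
  rw [rhs]
  have hA8 : (8:ℤ) ≤ (n2:ℤ) := by omega
  have hmul : (0:ℤ) ≤ ((n2:ℤ) - 1 - n1) * (3 * ((n2:ℤ) - 1 + n1) - 13) :=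
    mul_nonneg (by linarith) (by linarith)
  rcases hcase with h | h <;> rw [h] at key hmul <;> nlinarith [hmul, key]
end
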